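/- For coprime positive integers l₁ and l₂, the generalized Hecke operators satisfy T_{l₁} ∘ T_{l₂} = T_{l₁·l₂}, where for a formal series h, T_n(h) = Σ_{uy=n, 0≤v<y} h ∥ [[u,v],[0,y]] + Σ_{uy=n/2, 0≤v<2y} h ∥ [[√2·u, v/√2],[0,√2·y]] (second sum only when n is even). -/

import Mathlib

noncomputable section

/-- The coefficient ring `K = 𝓛[…, x_m^{[r]}, …]` with `𝓛 = ℂ` (which contains all
roots of unity), one variable `x_m^{[r]}` for each `m ∈ ℕ` and real index `r`
(the indices used are `r ∈ ℕ ∪ √2·ℕ`). -/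
abbrev RepRing := MvPolynomial (ℕ × ℝ) ℂ

/-- The endomorphism `ψ_u` of `K` sending `x_m^{[r]}` to `x_m^{[ru]}`. -/
def psiK (u : ℝ) : RepRing →ₐ[ℂ] RepRing :=
  MvPolynomial.rename (fun p => (p.1, p.2 * u))

/-- A formal series `Σ_e c_e q^e` with exponents `e ∈ ℚ` and coefficients in `K`,
recorded by its coefficient function. -/
abbrev FormalSeries := ℚ → RepRing

/-- The slash action of `α = s·[[u, v],[0, y]]` (with `s > 0` a real scalar, typically
`1` or `√2`, and `u, v, y` rational): `x_m^{[r]} ↦ x_m^{[r·su]}`, and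
`q^e ↦ e^{2πive/y}·q^{ue/y}`.  In terms of coefficient functions, the coefficient of
`q^{e'}` of `h ∥ α` is `e^{2πive'/u}·ψ_{su}(c_{e'y/u})`. -/
def slashA (h : FormalSeries) (s : ℝ) (u v y : ℚ) : FormalSeries := fun e' =>
  Complex.exp (2 * (Real.pi : ℂ) * Complex.I * ((v * e' / u : ℚ) : ℂ)) •
    psiK (s * (u : ℝ)) (h (e' * y / u))

/-- The generalized Hecke operator
`T_n h = Σ_{uy=n, 0≤v<y} h ∥ [[u,v],[0,y]] + Σ_{uy=n/2, 0≤v<2y} h ∥ [[√2u, v/√2],[0,√2y]]`,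
the second sum being present only when `n` is even.  Note
`[[√2u, v/√2],[0,√2y]] = √2·[[u, v/2],[0,y]]`. -/
def heckeT (n : ℕ) (h : FormalSeries) : FormalSeries :=
  (∑ x ∈ n.divisorsAntidiagonal, ∑ v ∈ Finset.range x.2,
    slashA h 1 (x.1 : ℚ) (v : ℚ) (x.2 : ℚ))
  + (if Even n then
      ∑ x ∈ (n / 2).divisorsAntidiagonal, ∑ v ∈ Finset.range (2 * x.2),
        slashA h (Real.sqrt 2) (x.1 : ℚ) ((v : ℚ) / 2) (x.2 : ℚ)
    else 0)

/-- `h` is a formal series supported on integer exponents (e.g. `q^{-1} + Σ_{m≥1} c_m q^m`). -/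
def IntSupported (h : FormalSeries) : Prop :=
  ∀ e : ℚ, (∀ z : ℤ, (z : ℚ) ≠ e) → h e = 0

lemma psiK_psiK (a b : ℝ) (x : RepRing) : psiK a (psiK b x) = psiK (b * a) x := by
  have hfun : ((fun p : ℕ × ℝ => (p.1, p.2 * a)) ∘ fun p : ℕ × ℝ => (p.1, p.2 * b)) =
      fun p : ℕ × ℝ => (p.1, p.2 * (b * a)) := by
    funext p; simp [mul_assoc]
  simp [psiK, MvPolynomial.rename_rename, hfun]

lemma slashA_sum {ι : Type*} (t : Finset ι) (f : ι → FormalSeries) (s : ℝ) (u v y : ℚ) :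
    slashA (∑ i ∈ t, f i) s u v y = ∑ i ∈ t, slashA (f i) s u v y := by
  funext e'
  simp [slashA, Finset.sum_apply, map_sum, Finset.smul_sum]

lemma slashA_add (f g : FormalSeries) (s : ℝ) (u v y : ℚ) :
    slashA (f + g) s u v y = slashA f s u v y + slashA g s u v y := by
  funext e'
  simp [slashA, smul_add]

lemma slash_slash (h : FormalSeries) (s s' : ℝ) (u v y u' v' y' : ℚ)
    (hu : u ≠ 0) (hu' : u' ≠ 0) :
    slashA (slashA h s' u' v' y') s u v y
      = slashA h (s * s') (u * u') (v * u' + v' * y) (y * y') := by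
  funext e'
  simp only [slashA, map_smul, psiK_psiK, smul_smul, ← Complex.exp_add]
  rw [show e' * y / u * y' / u' = e' * (y * y') / (u * u') by field_simp]
  rw [show (s' * (u' : ℝ)) * (s * (u : ℝ)) = (s * s') * (((u * u' : ℚ)) : ℝ) by
    push_cast; ring]
  rw [← mul_add, ← Rat.cast_add,
    show (v * e' / u + v' * (e' * y / u) / u' : ℚ) = (v * u' + v' * y) * e' / (u * u') by
      field_simp]

lemma slash_period (h : FormalSeries) (hs : IntSupported h) (s : ℝ) (u v y : ℚ) (k : ℕ) :
    slashA h s u (v + (k : ℚ) * y) y = slashA h s u v y := by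
  funext e'
  by_cases h0 : h (e' * y / u) = 0
  · simp [slashA, h0]
  · obtain ⟨z, hz⟩ : ∃ z : ℤ, (z : ℚ) = e' * y / u := by
      by_contra hc; push_neg at hc; exact h0 (hs _ hc)
    have key : ((v + (k : ℚ) * y) * e' / u : ℚ) = v * e' / u + (k : ℚ) * (e' * y / u) := by
      ring
    simp only [slashA, key, ← hz, Rat.cast_add, Rat.cast_mul, Rat.cast_natCast,
      Rat.cast_intCast]
    rw [mul_add, Complex.exp_add,
      show 2 * (Real.pi : ℂ) * Complex.I * ((k : ℂ) * (z : ℂ))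
          = (((k : ℤ) * z : ℤ) : ℂ) * (2 * (Real.pi : ℂ) * Complex.I) by push_cast; ring,
      Complex.exp_int_mul_two_pi_mul_I, mul_one]

open Finset in
lemma sum_residues {M : Type*} [AddCommMonoid M] (a c d : ℕ) (hc : 0 < c) (hd : 0 < d)
    (hac : Nat.Coprime a c) (g : ℕ → M) (hg : ∀ V k : ℕ, g (V + k * (c * d)) = g V) :
    ∑ v ∈ Finset.range c, ∑ v' ∈ Finset.range d, g (v * a + v' * c)
      = ∑ V ∈ Finset.range (c * d), g V := by
  have hn : 0 < c * d := Nat.mul_pos hc hd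
  haveI : NeZero (c * d) := ⟨hn.ne'⟩
  set G : ZMod (c * d) → M := fun z => g z.val with hG
  have hGV : ∀ V : ℕ, g V = G ((V : ZMod (c * d))) := by
    intro V
    have h1 : ((V : ZMod (c * d))).val = V % (c * d) := ZMod.val_natCast _ V
    simp only [hG, h1]
    conv_lhs => rw [← Nat.mod_add_div V (c * d), mul_comm (c*d) (V / (c*d))]
    exact hg _ _
  have hinj : Set.InjOn (fun p : ℕ × ℕ => ((p.1 * a + p.2 * c : ℕ) : ZMod (c * d)))
      ((Finset.range c ×ˢ Finset.range d) : Finset (ℕ × ℕ)) := by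
    rintro ⟨v, v'⟩ hp ⟨w, w'⟩ hq hEq
    simp only [Finset.coe_product, Set.mem_prod, Finset.mem_coe, Finset.mem_range] at hp hq
    simp only at hEq
    have hcd : c ∣ c * d := ⟨d, rfl⟩
    have h1 : ((v : ZMod c)) * (a : ZMod c) = (w : ZMod c) * (a : ZMod c) := by
      have h0 : ((v * a + v' * c : ℕ) : ZMod c) = ((w * a + w' * c : ℕ) : ZMod c) := by
        have := congrArg (ZMod.castHom hcd (ZMod c)) hEq
        rwa [map_natCast, map_natCast] at this
      push_cast at h0
      simpa [ZMod.natCast_self] using h0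
    have hu : IsUnit ((a : ZMod c)) := (ZMod.unitOfCoprime a hac).isUnit
    have h2 : (v : ZMod c) = (w : ZMod c) := hu.mul_right_cancel h1
    have h3 : v = w := by
      have := congrArg ZMod.val h2
      rwa [ZMod.val_natCast_of_lt hp.1, ZMod.val_natCast_of_lt hq.1] at this
    subst h3
    have h4 : ((v' * c : ℕ) : ZMod (c * d)) = ((w' * c : ℕ) : ZMod (c * d)) := by
      push_cast at hEq ⊢
      exact add_left_cancel hEq
    have h5 : v' * c = w' * c := by
      have := congrArg ZMod.val h4
      rwa [ZMod.val_natCast_of_lt (by calc v' * c < d * c := Nat.mul_lt_mul_right hc |>.mpr hp.2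
            _ = c * d := mul_comm d c),
        ZMod.val_natCast_of_lt (by calc w' * c < d * c := Nat.mul_lt_mul_right hc |>.mpr hq.2
            _ = c * d := mul_comm d c)] at this
    have h6 : v' = w' := Nat.eq_of_mul_eq_mul_right hc h5
    simp [h6]
  calc ∑ v ∈ Finset.range c, ∑ v' ∈ Finset.range d, g (v * a + v' * c)
      = ∑ p ∈ Finset.range c ×ˢ Finset.range d,
          G (((p.1 * a + p.2 * c : ℕ) : ZMod (c * d))) := by
        rw [← Finset.sum_product']
        exact Finset.sum_congr rfl fun p _ => hGV _
    _ = ∑ z ∈ (Finset.range c ×ˢ Finset.range d).image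
          (fun p : ℕ × ℕ => ((p.1 * a + p.2 * c : ℕ) : ZMod (c * d))), G z := by
        rw [Finset.sum_image (fun x hx y hy hxy => hinj hx hy hxy)]
    _ = ∑ z : ZMod (c * d), G z := by
        congr 1
        apply Finset.eq_univ_of_card
        rw [Finset.card_image_of_injOn hinj, Finset.card_product, Finset.card_range,
          Finset.card_range, ZMod.card]
    _ = ∑ V ∈ Finset.range (c * d), g V := by
        refine Finset.sum_nbij' (i := fun (z : ZMod (c * d)) => z.val)
          (j := fun (V : ℕ) => (V : ZMod (c * d)))
          (fun z _ => Finset.mem_range.mpr (ZMod.val_lt z))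
          (fun V _ => Finset.mem_univ _)
          (fun z _ => ZMod.natCast_rightInverse z)
          (fun V hV => ZMod.val_natCast_of_lt (Finset.mem_range.mp hV))
          (fun z _ => rfl)

open Finset in
lemma sum_divisorsAntidiagonal_mul {M : Type*} [AddCommMonoid M] {m n : ℕ}
    (cop : m.Coprime n) (F : ℕ × ℕ → M) :
    ∑ x ∈ m.divisorsAntidiagonal, ∑ y ∈ n.divisorsAntidiagonal,
        F (x.1 * y.1, x.2 * y.2)
      = ∑ x ∈ (m * n).divisorsAntidiagonal, F x := by
  rw [← Finset.sum_product']
  apply Finset.sum_nbij (fun (p : (ℕ × ℕ) × (ℕ × ℕ)) => (p.1.1 * p.2.1, p.1.2 * p.2.2))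
  · rintro ⟨⟨a1, a2⟩, ⟨b1, b2⟩⟩ h
    simp only [Nat.mem_divisorsAntidiagonal, Ne, mem_product] at h
    rcases h with ⟨⟨rfl, ha⟩, ⟨rfl, hb⟩⟩
    simp only [Nat.mem_divisorsAntidiagonal, Nat.mul_eq_zero, Ne]
    constructor
    · ring
    rw [Nat.mul_eq_zero] at *
    exact not_or_intro ha hb
  · simp only [Set.InjOn, mem_coe, Nat.mem_divisorsAntidiagonal, Ne, mem_product,
      Prod.mk.injEq]
    rintro ⟨⟨a1, a2⟩, ⟨b1, b2⟩⟩ ⟨⟨rfl, ha⟩, ⟨rfl, hb⟩⟩ ⟨⟨c1, c2⟩, ⟨d1, d2⟩⟩ hcd h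
    simp only [Prod.mk.injEq] at h
    ext <;> dsimp only
    · trans Nat.gcd (a1 * a2) (a1 * b1)
      · rw [Nat.gcd_mul_left, cop.coprime_mul_left.coprime_mul_right_right.gcd_eq_one, mul_one]
      · rw [← hcd.1.1, ← hcd.2.1] at cop
        rw [← hcd.1.1, h.1, Nat.gcd_mul_left,
          cop.coprime_mul_left.coprime_mul_right_right.gcd_eq_one, mul_one]
    · trans Nat.gcd (a1 * a2) (a2 * b2)
      · rw [mul_comm, Nat.gcd_mul_left, cop.coprime_mul_right.coprime_mul_left_right.gcd_eq_one,
          mul_one]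
      · rw [← hcd.1.1, ← hcd.2.1] at cop
        rw [← hcd.1.1, h.2, mul_comm, Nat.gcd_mul_left,
          cop.coprime_mul_right.coprime_mul_left_right.gcd_eq_one, mul_one]
    · trans Nat.gcd (b1 * b2) (a1 * b1)
      · rw [mul_comm, Nat.gcd_mul_right,
          cop.coprime_mul_right.coprime_mul_left_right.symm.gcd_eq_one, one_mul]
      · rw [← hcd.1.1, ← hcd.2.1] at cop
        rw [← hcd.2.1, h.1, mul_comm c1 d1, Nat.gcd_mul_left,
          cop.coprime_mul_right.coprime_mul_left_right.symm.gcd_eq_one, mul_one]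
    · trans Nat.gcd (b1 * b2) (a2 * b2)
      · rw [Nat.gcd_mul_right, cop.coprime_mul_left.coprime_mul_right_right.symm.gcd_eq_one,
          one_mul]
      · rw [← hcd.1.1, ← hcd.2.1] at cop
        rw [← hcd.2.1, h.2, Nat.gcd_mul_right,
          cop.coprime_mul_left.coprime_mul_right_right.symm.gcd_eq_one, one_mul]
  · simp only [Set.SurjOn, Set.subset_def, mem_coe, Nat.mem_divisorsAntidiagonal, Ne,
      mem_product, Set.mem_image, exists_prop, Prod.mk.injEq]
    rintro ⟨b1, b2⟩ h
    dsimp at h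
    use ((b1.gcd m, b2.gcd m), (b1.gcd n, b2.gcd n))
    rw [← cop.gcd_mul _, ← cop.gcd_mul _, ← h.1, Nat.gcd_mul_gcd_of_coprime_of_mul_eq_mul cop h.1,
      Nat.gcd_mul_gcd_of_coprime_of_mul_eq_mul cop.symm _]
    · rw [Nat.mul_eq_zero, not_or] at h
      simp [h.2.1, h.2.2]
    rw [mul_comm n m, h.1]
  · rintro ⟨⟨a1, a2⟩, ⟨b1, b2⟩⟩ _
    rfl

lemma A_A (l₁ l₂ : ℕ) (h₁ : 0 < l₁) (h₂ : 0 < l₂) (hco : Nat.Coprime l₁ l₂)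
    (h : FormalSeries) (hsupp : IntSupported h) :
    ∑ x ∈ l₁.divisorsAntidiagonal, ∑ v ∈ Finset.range x.2,
      slashA (∑ x' ∈ l₂.divisorsAntidiagonal, ∑ v' ∈ Finset.range x'.2,
          slashA h 1 (x'.1 : ℚ) (v' : ℚ) (x'.2 : ℚ)) 1 (x.1 : ℚ) (v : ℚ) (x.2 : ℚ)
      = ∑ x ∈ (l₁ * l₂).divisorsAntidiagonal, ∑ v ∈ Finset.range x.2,
          slashA h 1 (x.1 : ℚ) (v : ℚ) (x.2 : ℚ) := by
  rw [← sum_divisorsAntidiagonal_mul hco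
    (fun p => ∑ V ∈ Finset.range p.2, slashA h 1 (p.1 : ℚ) (V : ℚ) (p.2 : ℚ))]
  refine Finset.sum_congr rfl fun x hx => ?_
  obtain ⟨hxeq, -⟩ := Nat.mem_divisorsAntidiagonal.mp hx
  have hx1 : 0 < x.1 := Nat.pos_of_ne_zero fun h0 => by simp [h0] at hxeq; omega
  have hx2 : 0 < x.2 := Nat.pos_of_ne_zero fun h0 => by simp [h0] at hxeq; omega
  calc ∑ v ∈ Finset.range x.2,
        slashA (∑ x' ∈ l₂.divisorsAntidiagonal, ∑ v' ∈ Finset.range x'.2,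
          slashA h 1 (x'.1 : ℚ) (v' : ℚ) (x'.2 : ℚ)) 1 (x.1 : ℚ) (v : ℚ) (x.2 : ℚ)
      = ∑ v ∈ Finset.range x.2, ∑ x' ∈ l₂.divisorsAntidiagonal, ∑ v' ∈ Finset.range x'.2,
          slashA (slashA h 1 (x'.1 : ℚ) (v' : ℚ) (x'.2 : ℚ)) 1 (x.1 : ℚ) (v : ℚ) (x.2 : ℚ) := by
        simp only [slashA_sum]
    _ = ∑ x' ∈ l₂.divisorsAntidiagonal, ∑ v ∈ Finset.range x.2, ∑ v' ∈ Finset.range x'.2,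
          slashA (slashA h 1 (x'.1 : ℚ) (v' : ℚ) (x'.2 : ℚ)) 1 (x.1 : ℚ) (v : ℚ) (x.2 : ℚ) :=
        Finset.sum_comm
    _ = ∑ x' ∈ l₂.divisorsAntidiagonal,
          ∑ V ∈ Finset.range (x.2 * x'.2),
            slashA h 1 ((x.1 * x'.1 : ℕ) : ℚ) (V : ℚ) ((x.2 * x'.2 : ℕ) : ℚ) := by
        refine Finset.sum_congr rfl fun x' hx' => ?_
        obtain ⟨hx'eq, -⟩ := Nat.mem_divisorsAntidiagonal.mp hx'
        have hx'1 : 0 < x'.1 := Nat.pos_of_ne_zero fun h0 => by simp [h0] at hx'eq; omega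
        have hx'2 : 0 < x'.2 := Nat.pos_of_ne_zero fun h0 => by simp [h0] at hx'eq; omega
        have hcop : Nat.Coprime x'.1 x.2 :=
          Nat.Coprime.coprime_dvd_right ⟨x.1, by rw [← hxeq]; ring⟩
            (hco.symm.coprime_dvd_left ⟨x'.2, hx'eq.symm⟩)
        have hss : ∀ v v' : ℕ,
            slashA (slashA h 1 (x'.1 : ℚ) (v' : ℚ) (x'.2 : ℚ)) 1 (x.1 : ℚ) (v : ℚ) (x.2 : ℚ)
              = slashA h 1 ((x.1 * x'.1 : ℕ) : ℚ) ((v * x'.1 + v' * x.2 : ℕ) : ℚ)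
                  ((x.2 * x'.2 : ℕ) : ℚ) := by
          intro v v'
          rw [slash_slash h 1 1 _ _ _ _ _ _ (by positivity) (by positivity), one_mul]
          congr 1 <;> push_cast <;> ring
        simp only [hss]
        exact sum_residues x'.1 x.2 x'.2 hx2 hx'2 hcop
          (fun V => slashA h 1 ((x.1 * x'.1 : ℕ) : ℚ) (V : ℚ) ((x.2 * x'.2 : ℕ) : ℚ))
          (fun V k => by
            show slashA h 1 ((x.1 * x'.1 : ℕ) : ℚ) ((V + k * (x.2 * x'.2) : ℕ) : ℚ)
                ((x.2 * x'.2 : ℕ) : ℚ) = slashA h 1 _ (V : ℚ) _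
            rw [show ((V + k * (x.2 * x'.2) : ℕ) : ℚ)
                = (V : ℚ) + (k : ℚ) * ((x.2 * x'.2 : ℕ) : ℚ) by push_cast; ring]
            exact slash_period h hsupp 1 _ _ _ k)

lemma A_B (l₁ m : ℕ) (h₁ : 0 < l₁) (hm : 0 < m) (hco : Nat.Coprime l₁ (2 * m))
    (h : FormalSeries) (hsupp : IntSupported h) :
    ∑ x ∈ l₁.divisorsAntidiagonal, ∑ v ∈ Finset.range x.2,
      slashA (∑ x' ∈ m.divisorsAntidiagonal, ∑ v' ∈ Finset.range (2 * x'.2),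
          slashA h (Real.sqrt 2) (x'.1 : ℚ) ((v' : ℚ) / 2) (x'.2 : ℚ)) 1
        (x.1 : ℚ) (v : ℚ) (x.2 : ℚ)
      = ∑ x ∈ (l₁ * m).divisorsAntidiagonal, ∑ v ∈ Finset.range (2 * x.2),
          slashA h (Real.sqrt 2) (x.1 : ℚ) ((v : ℚ) / 2) (x.2 : ℚ) := by
  have hcom : Nat.Coprime l₁ m := hco.coprime_dvd_right (dvd_mul_left m 2)
  rw [← sum_divisorsAntidiagonal_mul hcom
    (fun p => ∑ V ∈ Finset.range (2 * p.2),
      slashA h (Real.sqrt 2) (p.1 : ℚ) ((V : ℚ) / 2) (p.2 : ℚ))]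
  refine Finset.sum_congr rfl fun x hx => ?_
  obtain ⟨hxeq, -⟩ := Nat.mem_divisorsAntidiagonal.mp hx
  have hx1 : 0 < x.1 := Nat.pos_of_ne_zero fun h0 => by simp [h0] at hxeq; omega
  have hx2 : 0 < x.2 := Nat.pos_of_ne_zero fun h0 => by simp [h0] at hxeq; omega
  calc ∑ v ∈ Finset.range x.2,
        slashA (∑ x' ∈ m.divisorsAntidiagonal, ∑ v' ∈ Finset.range (2 * x'.2),
          slashA h (Real.sqrt 2) (x'.1 : ℚ) ((v' : ℚ) / 2) (x'.2 : ℚ)) 1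
          (x.1 : ℚ) (v : ℚ) (x.2 : ℚ)
      = ∑ v ∈ Finset.range x.2, ∑ x' ∈ m.divisorsAntidiagonal, ∑ v' ∈ Finset.range (2 * x'.2),
          slashA (slashA h (Real.sqrt 2) (x'.1 : ℚ) ((v' : ℚ) / 2) (x'.2 : ℚ)) 1
            (x.1 : ℚ) (v : ℚ) (x.2 : ℚ) := by
        simp only [slashA_sum]
    _ = ∑ x' ∈ m.divisorsAntidiagonal, ∑ v ∈ Finset.range x.2, ∑ v' ∈ Finset.range (2 * x'.2),
          slashA (slashA h (Real.sqrt 2) (x'.1 : ℚ) ((v' : ℚ) / 2) (x'.2 : ℚ)) 1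
            (x.1 : ℚ) (v : ℚ) (x.2 : ℚ) :=
        Finset.sum_comm
    _ = ∑ x' ∈ m.divisorsAntidiagonal,
          ∑ V ∈ Finset.range (2 * (x.2 * x'.2)),
            slashA h (Real.sqrt 2) ((x.1 * x'.1 : ℕ) : ℚ) ((V : ℚ) / 2)
              ((x.2 * x'.2 : ℕ) : ℚ) := by
        refine Finset.sum_congr rfl fun x' hx' => ?_
        obtain ⟨hx'eq, -⟩ := Nat.mem_divisorsAntidiagonal.mp hx'
        have hx'1 : 0 < x'.1 := Nat.pos_of_ne_zero fun h0 => by simp [h0] at hx'eq; omega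
        have hx'2 : 0 < x'.2 := Nat.pos_of_ne_zero fun h0 => by simp [h0] at hx'eq; omega
        have hcop : Nat.Coprime (2 * x'.1) x.2 :=
          Nat.Coprime.coprime_dvd_right ⟨x.1, by rw [← hxeq]; ring⟩
            (hco.symm.coprime_dvd_left ⟨x'.2, by rw [← hx'eq]; ring⟩)
        have hss : ∀ v v' : ℕ,
            slashA (slashA h (Real.sqrt 2) (x'.1 : ℚ) ((v' : ℚ) / 2) (x'.2 : ℚ)) 1
              (x.1 : ℚ) (v : ℚ) (x.2 : ℚ)
              = slashA h (Real.sqrt 2) ((x.1 * x'.1 : ℕ) : ℚ)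
                  (((v * (2 * x'.1) + v' * x.2 : ℕ) : ℚ) / 2) ((x.2 * x'.2 : ℕ) : ℚ) := by
          intro v v'
          rw [slash_slash h 1 (Real.sqrt 2) _ _ _ _ _ _ (by positivity) (by positivity),
            one_mul]
          congr 1 <;> push_cast <;> ring
        simp only [hss]
        rw [show 2 * (x.2 * x'.2) = x.2 * (2 * x'.2) by ring]
        exact sum_residues (2 * x'.1) x.2 (2 * x'.2) hx2 (by positivity) hcop
          (fun V => slashA h (Real.sqrt 2) ((x.1 * x'.1 : ℕ) : ℚ) ((V : ℚ) / 2)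
            ((x.2 * x'.2 : ℕ) : ℚ))
          (fun V k => by
            show slashA h (Real.sqrt 2) ((x.1 * x'.1 : ℕ) : ℚ)
                (((V + k * (x.2 * (2 * x'.2)) : ℕ) : ℚ) / 2) ((x.2 * x'.2 : ℕ) : ℚ)
              = slashA h (Real.sqrt 2) _ ((V : ℚ) / 2) _
            rw [show (((V + k * (x.2 * (2 * x'.2)) : ℕ) : ℚ) / 2)
                = (V : ℚ) / 2 + (k : ℚ) * ((x.2 * x'.2 : ℕ) : ℚ) by push_cast; ring]
            exact slash_period h hsupp (Real.sqrt 2) _ _ _ k)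

lemma B_A (m l₂ : ℕ) (hm : 0 < m) (h₂ : 0 < l₂) (hco : Nat.Coprime (2 * m) l₂)
    (h : FormalSeries) (hsupp : IntSupported h) :
    ∑ x ∈ m.divisorsAntidiagonal, ∑ v ∈ Finset.range (2 * x.2),
      slashA (∑ x' ∈ l₂.divisorsAntidiagonal, ∑ v' ∈ Finset.range x'.2,
          slashA h 1 (x'.1 : ℚ) (v' : ℚ) (x'.2 : ℚ)) (Real.sqrt 2)
        (x.1 : ℚ) ((v : ℚ) / 2) (x.2 : ℚ)
      = ∑ x ∈ (m * l₂).divisorsAntidiagonal, ∑ v ∈ Finset.range (2 * x.2),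
          slashA h (Real.sqrt 2) (x.1 : ℚ) ((v : ℚ) / 2) (x.2 : ℚ) := by
  have hcom : Nat.Coprime m l₂ := (Nat.Coprime.coprime_dvd_left (dvd_mul_left m 2) hco)
  rw [← sum_divisorsAntidiagonal_mul hcom
    (fun p => ∑ V ∈ Finset.range (2 * p.2),
      slashA h (Real.sqrt 2) (p.1 : ℚ) ((V : ℚ) / 2) (p.2 : ℚ))]
  refine Finset.sum_congr rfl fun x hx => ?_
  obtain ⟨hxeq, -⟩ := Nat.mem_divisorsAntidiagonal.mp hx
  have hx1 : 0 < x.1 := Nat.pos_of_ne_zero fun h0 => by simp [h0] at hxeq; omega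
  have hx2 : 0 < x.2 := Nat.pos_of_ne_zero fun h0 => by simp [h0] at hxeq; omega
  calc ∑ v ∈ Finset.range (2 * x.2),
        slashA (∑ x' ∈ l₂.divisorsAntidiagonal, ∑ v' ∈ Finset.range x'.2,
          slashA h 1 (x'.1 : ℚ) (v' : ℚ) (x'.2 : ℚ)) (Real.sqrt 2)
          (x.1 : ℚ) ((v : ℚ) / 2) (x.2 : ℚ)
      = ∑ v ∈ Finset.range (2 * x.2), ∑ x' ∈ l₂.divisorsAntidiagonal,
          ∑ v' ∈ Finset.range x'.2,
          slashA (slashA h 1 (x'.1 : ℚ) (v' : ℚ) (x'.2 : ℚ)) (Real.sqrt 2)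
            (x.1 : ℚ) ((v : ℚ) / 2) (x.2 : ℚ) := by
        simp only [slashA_sum]
    _ = ∑ x' ∈ l₂.divisorsAntidiagonal, ∑ v ∈ Finset.range (2 * x.2),
          ∑ v' ∈ Finset.range x'.2,
          slashA (slashA h 1 (x'.1 : ℚ) (v' : ℚ) (x'.2 : ℚ)) (Real.sqrt 2)
            (x.1 : ℚ) ((v : ℚ) / 2) (x.2 : ℚ) :=
        Finset.sum_comm
    _ = ∑ x' ∈ l₂.divisorsAntidiagonal,
          ∑ V ∈ Finset.range (2 * (x.2 * x'.2)),
            slashA h (Real.sqrt 2) ((x.1 * x'.1 : ℕ) : ℚ) ((V : ℚ) / 2)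
              ((x.2 * x'.2 : ℕ) : ℚ) := by
        refine Finset.sum_congr rfl fun x' hx' => ?_
        obtain ⟨hx'eq, -⟩ := Nat.mem_divisorsAntidiagonal.mp hx'
        have hx'1 : 0 < x'.1 := Nat.pos_of_ne_zero fun h0 => by simp [h0] at hx'eq; omega
        have hx'2 : 0 < x'.2 := Nat.pos_of_ne_zero fun h0 => by simp [h0] at hx'eq; omega
        have hcop : Nat.Coprime x'.1 (2 * x.2) :=
          Nat.Coprime.coprime_dvd_right ⟨x.1, by rw [← hxeq]; ring⟩
            (hco.symm.coprime_dvd_left ⟨x'.2, hx'eq.symm⟩)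
        have hss : ∀ v v' : ℕ,
            slashA (slashA h 1 (x'.1 : ℚ) (v' : ℚ) (x'.2 : ℚ)) (Real.sqrt 2)
              (x.1 : ℚ) ((v : ℚ) / 2) (x.2 : ℚ)
              = slashA h (Real.sqrt 2) ((x.1 * x'.1 : ℕ) : ℚ)
                  (((v * x'.1 + v' * (2 * x.2) : ℕ) : ℚ) / 2) ((x.2 * x'.2 : ℕ) : ℚ) := by
          intro v v'
          rw [slash_slash h (Real.sqrt 2) 1 _ _ _ _ _ _ (by positivity) (by positivity),
            mul_one]
          congr 1 <;> push_cast <;> ring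
        simp only [hss]
        rw [show 2 * (x.2 * x'.2) = (2 * x.2) * x'.2 by ring]
        exact sum_residues x'.1 (2 * x.2) x'.2 (by positivity) hx'2 hcop
          (fun V => slashA h (Real.sqrt 2) ((x.1 * x'.1 : ℕ) : ℚ) ((V : ℚ) / 2)
            ((x.2 * x'.2 : ℕ) : ℚ))
          (fun V k => by
            show slashA h (Real.sqrt 2) ((x.1 * x'.1 : ℕ) : ℚ)
                (((V + k * ((2 * x.2) * x'.2) : ℕ) : ℚ) / 2) ((x.2 * x'.2 : ℕ) : ℚ)
              = slashA h (Real.sqrt 2) _ ((V : ℚ) / 2) _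
            rw [show (((V + k * ((2 * x.2) * x'.2) : ℕ) : ℚ) / 2)
                = (V : ℚ) / 2 + (k : ℚ) * ((x.2 * x'.2 : ℕ) : ℚ) by push_cast; ring]
            exact slash_period h hsupp (Real.sqrt 2) _ _ _ k)

/-- For coprime positive integers `l₁`, `l₂`, the generalized Hecke operators satisfy
`T_{l₁} ∘ T_{l₂} = T_{l₁·l₂}`. -/
theorem heckeT_mul_coprime (l₁ l₂ : ℕ) (h₁ : 0 < l₁) (h₂ : 0 < l₂)
    (hco : Nat.Coprime l₁ l₂) (h : FormalSeries) (hsupp : IntSupported h) :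
    heckeT l₁ (heckeT l₂ h) = heckeT (l₁ * l₂) h := by
  rcases Nat.even_or_odd l₁ with he₁ | ho₁
  · -- l₁ even, so l₂ odd
    have ho₂ : ¬ Even l₂ := by
      intro he₂
      have : (2 : ℕ) ∣ 1 := hco ▸ Nat.dvd_gcd he₁.two_dvd he₂.two_dvd
      omega
    obtain ⟨k, rfl⟩ : ∃ k, l₁ = 2 * k := by
      obtain ⟨k, hk⟩ := he₁; exact ⟨k, by omega⟩
    have hk : 0 < k := by omega
    have he₁' : Even (2 * k) := ⟨k, by omega⟩
    have hev : Even (2 * k * l₂) := Nat.even_mul.mpr (Or.inl he₁')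
    have e1 : 2 * k / 2 = k := by omega
    have e2 : 2 * k * l₂ / 2 = k * l₂ := by
      rw [mul_assoc, Nat.mul_div_cancel_left _ (by norm_num : 0 < 2)]
    simp only [heckeT, if_neg ho₂, add_zero, if_pos he₁', if_pos hev, e1, e2]
    rw [A_A (2 * k) l₂ h₁ h₂ hco h hsupp, B_A k l₂ hk h₂ hco h hsupp]
  · rcases Nat.even_or_odd l₂ with he₂ | ho₂
    · -- l₂ even, l₁ odd
      have ho₁ : ¬ Even (l₁) := Nat.not_even_iff_odd.mpr ho₁
      obtain ⟨k, rfl⟩ : ∃ k, l₂ = 2 * k := by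
        obtain ⟨k, hk⟩ := he₂; exact ⟨k, by omega⟩
      have hk : 0 < k := by omega
      have he₂' : Even (2 * k) := ⟨k, by omega⟩
      have hev : Even (l₁ * (2 * k)) := Nat.even_mul.mpr (Or.inr he₂')
      have e1 : 2 * k / 2 = k := by omega
      have e2 : l₁ * (2 * k) / 2 = l₁ * k := by
        rw [show l₁ * (2 * k) = 2 * (l₁ * k) by ring, Nat.mul_div_cancel_left _ (by norm_num : 0 < 2)]
      simp only [heckeT, if_neg ho₁, if_pos he₂', if_pos hev, e1, e2,
        slashA_add, Finset.sum_add_distrib, add_zero]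
      rw [A_A l₁ (2 * k) h₁ h₂ hco h hsupp, A_B l₁ k h₁ hk hco h hsupp]
    · have ho₁' : ¬ Even l₁ := Nat.not_even_iff_odd.mpr ho₁
      have ho₂' : ¬ Even l₂ := Nat.not_even_iff_odd.mpr ho₂
      have hev : ¬ Even (l₁ * l₂) := by
        rw [Nat.even_mul]; tauto
      simp only [heckeT, if_neg ho₁', if_neg ho₂', if_neg hev, add_zero]
      exact A_A l₁ l₂ h₁ h₂ hco h hsupp
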